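/- If a finite graph G admits a perfect fractional matching, then G admits a perfect 2-matching, i.e., a collection of pairwise vertex-disjoint edges and odd cycles covering all vertices of G. -/

import Mathlib

open Finset Equiv

theorem Equiv.Perm.apply_inv_self {α : Type*} (f : Equiv.Perm α) (x : α) : f (f⁻¹ x) = x :=
  f.apply_symm_apply x

theorem Equiv.Perm.inv_apply_self {α : Type*} (f : Equiv.Perm α) (x : α) : f⁻¹ (f x) = x :=
  f.symm_apply_apply x

/-- Walks stay in sets closed under adjacency. -/
lemma reachable_mem_closed {V : Type*} {H : SimpleGraph V} {S : Set V}
    (hS : ∀ u ∈ S, ∀ x, H.Adj u x → x ∈ S) {a b : V}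
    (hab : H.Reachable a b) (ha : a ∈ S) : b ∈ S := by
  obtain ⟨p⟩ := hab
  induction p with
  | nil => exact ha
  | cons h p ih => exact ih (hS _ ha _ h)

theorem perm_two_matching {V : Type*} [Fintype V] [DecidableEq V]
    (G : SimpleGraph V) (σ : Equiv.Perm V)
    (hfp : ∀ v, σ v ≠ v) (hadj : ∀ v, G.Adj v (σ v)) :
    ∃ H : SimpleGraph V, H ≤ G ∧
      (∀ v, 1 ≤ (H.neighborSet v).ncard ∧ (H.neighborSet v).ncard ≤ 2) ∧
      ∀ c : H.ConnectedComponent, c.supp.ncard = 2 ∨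
        (Odd c.supp.ncard ∧ ∀ v ∈ c.supp, (H.neighborSet v).ncard = 2) := by
  classical
  letI : LinearOrder V := LinearOrder.lift' (Fintype.equivFin V) (Fintype.equivFin V).injective
  set len : V → ℕ := fun v => #(σ.cycleOf v).support with hlen_def
  have hmem : ∀ v, v ∈ (σ.cycleOf v).support := fun v =>
    Equiv.Perm.mem_support_cycleOf_iff.2
      ⟨Equiv.Perm.SameCycle.refl _ _, Equiv.Perm.mem_support.2 (hfp v)⟩
  have hlen2 : ∀ v, 2 ≤ len v := fun v =>
    Equiv.Perm.two_le_card_support_cycleOf_iff.2 (hfp v)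
  have hcycA : ∀ v, Equiv.Perm.cycleOf σ (σ v) = Equiv.Perm.cycleOf σ v := fun v =>
    Equiv.Perm.cycleOf_self_apply σ v
  have hcycI : ∀ v, Equiv.Perm.cycleOf σ (σ⁻¹ v) = Equiv.Perm.cycleOf σ v := fun v => by
    have := Equiv.Perm.cycleOf_self_apply σ (σ⁻¹ v)
    rw [Equiv.Perm.apply_inv_self] at this
    exact this.symm
  have hlenA : ∀ v, len (σ v) = len v := fun v => by simp [hlen_def, hcycA]
  have hlenI : ∀ v, len (σ⁻¹ v) = len v := fun v => by simp only [hlen_def, hcycI]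
  -- representative of each cycle
  set r : V → V := fun v => ((σ.cycleOf v).support).min' ⟨v, hmem v⟩ with hr_def
  have hrA : ∀ v, r (σ v) = r v := fun v => by simp [hr_def, hcycA]
  have hrI : ∀ v, r (σ⁻¹ v) = r v := fun v => by simp only [hr_def, hcycI]
  have hrmem : ∀ v, r v ∈ (σ.cycleOf v).support := fun v => Finset.min'_mem _ _
  have hcyc_r : ∀ v, Equiv.Perm.cycleOf σ (r v) = Equiv.Perm.cycleOf σ v := fun v =>
    ((Equiv.Perm.mem_support_cycleOf_iff.1 (hrmem v)).1).symm.cycleOf_eq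
  have hcycleOn : ∀ v, σ.IsCycleOn (σ.cycleOf v).support := fun v =>
    Equiv.Perm.isCycleOn_support_cycleOf σ v
  have hex : ∀ v, ∃ i : ℕ, (σ ^ i) (r v) = v := fun v => by
    obtain ⟨n, _, hn⟩ := (hcycleOn v).exists_pow_eq (hrmem v) (hmem v)
    exact ⟨n, hn⟩
  set idx : V → ℕ := fun v => Nat.find (hex v) with hidx_def
  have hidx_spec : ∀ v, (σ ^ idx v) (r v) = v := fun v => Nat.find_spec (hex v)
  have hidx_min : ∀ v, ∀ m < idx v, (σ ^ m) (r v) ≠ v := fun v m hm => Nat.find_min (hex v) hm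
  have hidx_lt : ∀ v, idx v < len v := fun v => by
    obtain ⟨n, hn, hn2⟩ := (hcycleOn v).exists_pow_eq (hrmem v) (hmem v)
    exact lt_of_le_of_lt (Nat.find_le hn2) hn
  -- matching function for even cycles
  set m : V → V := fun v => if Even (idx v) then σ v else σ⁻¹ v with hm_def
  have hm_ne : ∀ v, m v ≠ v := fun v => by
    by_cases h : Even (idx v) <;> simp only [hm_def, h, if_pos, if_neg, if_true, if_false]
    · exact hfp v
    · intro he; exact hfp v (by conv_lhs => rw [← he, Equiv.Perm.apply_inv_self])
  have hm_or : ∀ v, m v = σ v ∨ m v = σ⁻¹ v := fun v => by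
    by_cases h : Even (idx v) <;> simp [hm_def, h]
  have hlenM : ∀ v, len (m v) = len v := fun v => by
    rcases hm_or v with h | h <;> rw [h]
    exacts [hlenA v, hlenI v]
  -- index of σ v / σ⁻¹ v
  have hidxA : ∀ v, Even (len v) → Even (idx v) → idx (σ v) = idx v + 1 := by
    intro v hel hei
    have hr' : r (σ v) = r v := hrA v
    have key : (σ ^ (idx v + 1)) (r (σ v)) = σ v := by
      rw [hr', pow_succ', Equiv.Perm.mul_apply, hidx_spec v]
    rw [show idx (σ v) = Nat.find (hex (σ v)) from rfl, Nat.find_eq_iff]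
    refine ⟨key, ?_⟩
    intro j hj hjspec
    rw [hr'] at hjspec
    match j, hj with
    | 0, _ =>
      have h0 : (σ ^ (idx v + 1)) (r v) = (σ ^ 0) (r v) := by
        rw [pow_zero, Equiv.Perm.one_apply, pow_succ', Equiv.Perm.mul_apply, hidx_spec v]
        exact hjspec.symm
      have hmod := ((hcycleOn v).pow_apply_eq_pow_apply (hrmem v)).1 h0
      have hdvd : len v ∣ idx v + 1 := (Nat.modEq_zero_iff_dvd).1 hmod
      have hlt : idx v + 1 ≤ len v := hidx_lt v
      have heq : idx v + 1 = len v := Nat.le_antisymm hlt (Nat.le_of_dvd (Nat.succ_pos _) hdvd)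
      rw [← heq] at hel
      exact (Nat.even_add_one.1 hel) hei
    | j' + 1, hj =>
      have h2 : (σ ^ j') (r v) = v := by
        have h3 := congrArg (σ⁻¹ ·) hjspec
        simpa [pow_succ', Equiv.Perm.mul_apply] using h3
      exact hidx_min v j' (by omega) h2
  have hidxI : ∀ v, ¬ Even (idx v) → idx (σ⁻¹ v) = idx v - 1 := by
    intro v hoi
    have h1 : 1 ≤ idx v := by
      rcases Nat.eq_zero_or_pos (idx v) with h | h
      · exact absurd (h ▸ Even.zero) hoi
      · exact h
    have hr' : r (σ⁻¹ v) = r v := hrI v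
    have key : (σ ^ (idx v - 1)) (r (σ⁻¹ v)) = σ⁻¹ v := by
      rw [hr']
      apply σ.injective
      rw [Equiv.Perm.apply_inv_self, ← Equiv.Perm.mul_apply, ← pow_succ',
        show idx v - 1 + 1 = idx v from by omega]
      exact hidx_spec v
    rw [show idx (σ⁻¹ v) = Nat.find (hex (σ⁻¹ v)) from rfl, Nat.find_eq_iff]
    refine ⟨key, ?_⟩
    intro j hj hjspec
    rw [hr'] at hjspec
    have h2 : (σ ^ (j + 1)) (r v) = v := by
      rw [pow_succ', Equiv.Perm.mul_apply, hjspec, Equiv.Perm.apply_inv_self]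
    exact hidx_min v (j + 1) (by omega) h2
  -- involution property on even cycles
  have hminv : ∀ v, Even (len v) → m (m v) = v := by
    intro v hel
    by_cases hei : Even (idx v)
    · have hmv : m v = σ v := by simp [hm_def, hei]
      have hidx' : idx (σ v) = idx v + 1 := hidxA v hel hei
      have : ¬ Even (idx (σ v)) := by
        rw [hidx']; exact Nat.not_even_iff_odd.2 (Even.add_one hei)
      rw [hmv, show m (σ v) = σ⁻¹ (σ v) from by simp [hm_def, this], Equiv.Perm.inv_apply_self]
    · have hmv : m v = σ⁻¹ v := by simp [hm_def, hei]
      have h1 : 1 ≤ idx v := by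
        rcases Nat.eq_zero_or_pos (idx v) with h | h
        · exact absurd (h ▸ Even.zero) hei
        · exact h
      have hidx' : idx (σ⁻¹ v) = idx v - 1 := hidxI v hei
      have hev : Even (idx (σ⁻¹ v)) := by
        rw [hidx']
        obtain ⟨k, hk⟩ := Nat.not_even_iff_odd.1 hei
        rw [hk, Nat.add_sub_cancel]
        exact even_two_mul k
      rw [hmv, show m (σ⁻¹ v) = σ (σ⁻¹ v) from if_pos hev, Equiv.Perm.apply_inv_self]
  -- σ v ≠ σ⁻¹ v on odd cycles
  have hodd_ne : ∀ v, Odd (len v) → σ v ≠ σ⁻¹ v := by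
    intro v hol h
    have h2 : (σ ^ 2) v = (σ ^ 0) v := by
      rw [pow_zero, Equiv.Perm.one_apply, pow_two, Equiv.Perm.mul_apply]
      rw [show σ v = σ⁻¹ v from h, Equiv.Perm.apply_inv_self]
    have hmod := ((hcycleOn v).pow_apply_eq_pow_apply (hmem v)).1 h2
    have hdvd : len v ∣ 2 := (Nat.modEq_zero_iff_dvd).1 hmod
    have hle : len v ≤ 2 := Nat.le_of_dvd (by norm_num) hdvd
    have heq : len v = 2 := le_antisymm hle (hlen2 v)
    rw [heq] at hol
    exact (by decide : ¬ Odd 2) hol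
  -- the 2-matching graph
  let H : SimpleGraph V :=
    { Adj := fun u v => u ≠ v ∧
        ((Odd (len u) ∧ Odd (len v) ∧ (σ u = v ∨ σ v = u)) ∨
         (Even (len u) ∧ Even (len v) ∧ m u = v ∧ m v = u))
      symm := by
        constructor
        rintro u v ⟨hne, h | h⟩
        · exact ⟨hne.symm, Or.inl ⟨h.2.1, h.1, h.2.2.symm⟩⟩
        · exact ⟨hne.symm, Or.inr ⟨h.2.1, h.1, h.2.2.2, h.2.2.1⟩⟩
      loopless := ⟨fun v h => h.1 rfl⟩ }
  have hAdj : ∀ u v, H.Adj u v ↔ (u ≠ v ∧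
        ((Odd (len u) ∧ Odd (len v) ∧ (σ u = v ∨ σ v = u)) ∨
         (Even (len u) ∧ Even (len v) ∧ m u = v ∧ m v = u))) := fun u v => Iff.rfl
  -- neighbor sets
  have hnbr_odd : ∀ v, Odd (len v) → H.neighborSet v = {σ v, σ⁻¹ v} := by
    intro v hol
    ext x
    simp only [SimpleGraph.mem_neighborSet, hAdj, Set.mem_insert_iff, Set.mem_singleton_iff]
    constructor
    · rintro ⟨hne, h | h⟩
      · rcases h.2.2 with h' | h'
        · exact Or.inl h'.symm
        · exact Or.inr (by rw [← h', Equiv.Perm.inv_apply_self])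
      · exact absurd h.1 (Nat.not_even_iff_odd.2 hol)
    · rintro (rfl | rfl)
      · exact ⟨(hfp v).symm, Or.inl ⟨hol, by rwa [hlenA], Or.inl rfl⟩⟩
      · refine ⟨fun h => hfp v (by conv_lhs => rw [h, Equiv.Perm.apply_inv_self]), ?_⟩
        exact Or.inl ⟨hol, by rwa [hlenI], Or.inr (Equiv.Perm.apply_inv_self σ v)⟩
  have hnbr_even : ∀ v, Even (len v) → H.neighborSet v = {m v} := by
    intro v hev
    ext x
    simp only [SimpleGraph.mem_neighborSet, hAdj, Set.mem_singleton_iff]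
    constructor
    · rintro ⟨hne, h | h⟩
      · exact absurd hev (Nat.not_even_iff_odd.2 h.1)
      · exact h.2.2.1.symm
    · rintro rfl
      exact ⟨(hm_ne v).symm, Or.inr ⟨hev, by rwa [hlenM], rfl, hminv v hev⟩⟩
  -- degree counts
  have hdeg_odd : ∀ v, Odd (len v) → (H.neighborSet v).ncard = 2 := by
    intro v hol
    rw [hnbr_odd v hol]
    exact Set.ncard_pair (hodd_ne v hol)
  have hdeg_even : ∀ v, Even (len v) → (H.neighborSet v).ncard = 1 := by
    intro v hev
    rw [hnbr_even v hev]
    exact Set.ncard_singleton _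
  have hdeg : ∀ v, 1 ≤ (H.neighborSet v).ncard ∧ (H.neighborSet v).ncard ≤ 2 := by
    intro v
    rcases Nat.even_or_odd (len v) with h | h
    · rw [hdeg_even v h]; omega
    · rw [hdeg_odd v h]; omega
  -- H ≤ G
  have hle : H ≤ G := by
    rintro u v ⟨hne, h | h⟩
    · rcases h.2.2 with h' | h'
      · exact h' ▸ hadj u
      · exact h' ▸ (hadj v).symm
    · rcases hm_or u with h' | h'
      · rw [← h.2.2.1, h']; exact hadj u
      · have : σ v = u := by rw [← h.2.2.1, h', Equiv.Perm.apply_inv_self]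
        exact this ▸ (hadj v).symm
  refine ⟨H, hle, hdeg, ?_⟩
  intro c
  obtain ⟨v, rfl⟩ := c.exists_rep
  rcases Nat.even_or_odd (len v) with hev | hol
  · -- even cycle: component is a single matching edge
    left
    have hsupp : (H.connectedComponentMk v).supp = {v, m v} := by
      apply Set.Subset.antisymm
      · intro u hu
        rw [SimpleGraph.ConnectedComponent.mem_supp_iff, SimpleGraph.ConnectedComponent.eq] at hu
        refine reachable_mem_closed (S := {v, m v}) ?_ hu.symm (Set.mem_insert _ _)
        rintro a (rfl | ha) x hx
        · rcases hx.2 with h | h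
          · exact absurd hev (Nat.not_even_iff_odd.2 h.1)
          · exact Or.inr (h.2.2.1.symm)
        · rw [Set.mem_singleton_iff] at ha; subst ha
          rcases hx.2 with h | h
          · exact absurd (by rw [hlenM]; exact hev : Even (len (m v)))
              (Nat.not_even_iff_odd.2 h.1)
          · left
            rw [← h.2.2.1, hminv v hev]
      · rintro u (rfl | hu)
        · exact SimpleGraph.ConnectedComponent.mem_supp_iff _ _ |>.2 rfl
        · rw [Set.mem_singleton_iff] at hu; subst hu
          rw [SimpleGraph.ConnectedComponent.mem_supp_iff, SimpleGraph.ConnectedComponent.eq]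
          have hadj' : H.Adj v (m v) :=
            ⟨(hm_ne v).symm, Or.inr ⟨hev, by rwa [hlenM], rfl, hminv v hev⟩⟩
          exact hadj'.symm.reachable
    show (H.connectedComponentMk v).supp.ncard = 2
    rw [hsupp]
    exact Set.ncard_pair (hm_ne v).symm
  · -- odd cycle
    right
    have hclosed : ∀ u ∈ ((σ.cycleOf v).support : Set V), ∀ x, H.Adj u x →
        x ∈ ((σ.cycleOf v).support : Set V) := by
      intro u hu x hx
      simp only [Finset.coe_sort_coe, Finset.mem_coe] at hu ⊢
      have hsc : σ.SameCycle v u := (Equiv.Perm.mem_support_cycleOf_iff.1 hu).1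
      have hlu : len u = len v := by
        simp only [hlen_def]
        rw [hsc.cycleOf_eq]
      rcases hx.2 with h | h
      · rcases h.2.2 with h' | h'
        · subst h'
          exact Equiv.Perm.mem_support_cycleOf_iff.2
            ⟨hsc.trans (Equiv.Perm.sameCycle_apply_right.2 (Equiv.Perm.SameCycle.refl _ _)),
              Equiv.Perm.mem_support.2 (hfp v)⟩
        · have : x = σ⁻¹ u := by rw [← h', Equiv.Perm.inv_apply_self]
          subst this
          exact Equiv.Perm.mem_support_cycleOf_iff.2
            ⟨(Equiv.Perm.sameCycle_symm_apply_right.2 hsc),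
              Equiv.Perm.mem_support.2 (hfp v)⟩
      · rw [hlu] at h
        exact absurd h.1 (Nat.not_even_iff_odd.2 hol)
    have hsupp : (H.connectedComponentMk v).supp = ((σ.cycleOf v).support : Set V) := by
      apply Set.Subset.antisymm
      · intro u hu
        rw [SimpleGraph.ConnectedComponent.mem_supp_iff, SimpleGraph.ConnectedComponent.eq] at hu
        exact reachable_mem_closed hclosed hu.symm (by simpa using hmem v)
      · intro u hu
        simp only [Finset.mem_coe] at hu
        have hsc : σ.SameCycle v u := (Equiv.Perm.mem_support_cycleOf_iff.1 hu).1
        obtain ⟨n, hnlt, hn⟩ := (hcycleOn v).exists_pow_eq (hmem v) hu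
        rw [SimpleGraph.ConnectedComponent.mem_supp_iff, SimpleGraph.ConnectedComponent.eq]
        rw [← hn]
        clear hn hnlt hu hsc
        induction n with
        | zero => simpa using SimpleGraph.Reachable.refl v
        | succ k ih =>
          refine SimpleGraph.Reachable.trans ?_ ih
          have hadj' : H.Adj ((σ ^ (k+1)) v) ((σ ^ k) v) := by
            refine ⟨?_, Or.inl ⟨?_, ?_, Or.inr ?_⟩⟩
            · intro h
              have : σ ((σ ^ k) v) = (σ ^ k) v := by
                rw [← Equiv.Perm.mul_apply, ← pow_succ']
                exact h
              exact hfp _ this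
            · simp only [hlen_def]
              rw [Equiv.Perm.cycleOf_self_apply_pow]
              exact hol
            · simp only [hlen_def]
              rw [Equiv.Perm.cycleOf_self_apply_pow]
              exact hol
            · rw [pow_succ', Equiv.Perm.mul_apply]
          exact hadj'.reachable
    constructor
    · show Odd (H.connectedComponentMk v).supp.ncard
      rw [hsupp, Set.ncard_coe_finset]
      exact hol
    · intro u hu
      rw [show (Quot.mk H.Reachable v : H.ConnectedComponent) = H.connectedComponentMk v from rfl,
        hsupp] at hu
      simp only [Finset.mem_coe] at hu
      have hsc : σ.SameCycle v u := (Equiv.Perm.mem_support_cycleOf_iff.1 hu).1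
      have hlu : len u = len v := by
        simp only [hlen_def]
        rw [hsc.cycleOf_eq]
      exact hdeg_odd u (hlu ▸ hol)

/-- **Perfect fractional matching implies perfect 2-matching.** If a finite graph `G`
admits a perfect fractional matching, then there is a spanning subgraph `H ≤ G` all of
whose vertices have degree 1 or 2 and each of whose connected components is either a
single edge (2 vertices) or an odd cycle (odd number of vertices, all of degree 2). -/
theorem perfect_fractional_matching_implies_perfect_two_matching
    {V : Type*} [Fintype V] [DecidableEq V] (G : SimpleGraph V) [DecidableRel G.Adj]
    (w : Sym2 V → ℝ)
    (hw01 : ∀ e, 0 ≤ w e ∧ w e ≤ 1)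
    (hwsupp : ∀ e, e ∉ G.edgeSet → w e = 0)
    (hperf : ∀ v, ∑ e ∈ G.edgeFinset, (if v ∈ e then w e else 0) = 1) :
    ∃ H : SimpleGraph V, H ≤ G ∧
      (∀ v, 1 ≤ (H.neighborSet v).ncard ∧ (H.neighborSet v).ncard ≤ 2) ∧
      ∀ c : H.ConnectedComponent, c.supp.ncard = 2 ∨
        (Odd c.supp.ncard ∧ ∀ v ∈ c.supp, (H.neighborSet v).ncard = 2) := by
  classical
  -- the incidence finset is the image of the neighbor finset
  have hinc : ∀ v : V, G.incidenceFinset v =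
      (G.neighborFinset v).image (fun u => s(v, u)) := by
    intro v
    ext e
    induction e with
    | h a b =>
      simp only [SimpleGraph.mem_incidenceFinset, Finset.mem_image,
        SimpleGraph.mem_neighborFinset, SimpleGraph.mk'_mem_incidenceSet_iff]
      constructor
      · rintro ⟨hab, rfl | rfl⟩
        · exact ⟨b, hab, rfl⟩
        · exact ⟨a, hab.symm, Sym2.eq_swap⟩
      · rintro ⟨u, hu, he⟩
        rw [Sym2.eq_iff] at he
        rcases he with ⟨rfl, rfl⟩ | ⟨rfl, rfl⟩
        · exact ⟨hu, Or.inl rfl⟩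
        · exact ⟨hu.symm, Or.inr rfl⟩
  -- row sums are 1
  have hrow : ∀ v : V, ∑ u : V, w s(v, u) = 1 := by
    intro v
    have h1 : ∑ u : V, w s(v, u) = ∑ u ∈ G.neighborFinset v, w s(v, u) := by
      symm
      apply Finset.sum_subset (Finset.subset_univ _)
      intro u _ hu
      apply hwsupp
      rw [SimpleGraph.mem_edgeSet]
      rwa [SimpleGraph.mem_neighborFinset] at hu
    have h2 : ∑ u ∈ G.neighborFinset v, w s(v, u) = ∑ e ∈ G.incidenceFinset v, w e := by
      rw [hinc]
      rw [Finset.sum_image]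
      intro a _ b _ hab
      exact (Sym2.congr_right).1 hab
    have h3 : ∑ e ∈ G.incidenceFinset v, w e
        = ∑ e ∈ G.edgeFinset, (if v ∈ e then w e else 0) := by
      rw [SimpleGraph.incidenceFinset_eq_filter, Finset.sum_filter]
    rw [h1, h2, h3, hperf v]
  -- Hall's condition
  set t : V → Finset V := fun v => Finset.univ.filter (fun u => 0 < w s(v, u)) with ht_def
  have hall : ∀ S : Finset V, S.card ≤ (S.biUnion t).card := by
    intro S
    have key : (S.card : ℝ) ≤ ((S.biUnion t).card : ℝ) := by
      calc (S.card : ℝ) = ∑ v ∈ S, (1 : ℝ) := by simp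
        _ = ∑ v ∈ S, ∑ u : V, w s(v, u) := by
            refine Finset.sum_congr rfl fun v _ => (hrow v).symm
        _ = ∑ v ∈ S, ∑ u ∈ t v, w s(v, u) := by
            refine Finset.sum_congr rfl fun v _ => ?_
            symm
            apply Finset.sum_subset (Finset.filter_subset _ _)
            intro u _ hu
            simp only [ht_def, Finset.mem_filter, Finset.mem_univ, true_and, not_lt] at hu
            exact le_antisymm hu (hw01 _).1
        _ ≤ ∑ v ∈ S, ∑ u ∈ S.biUnion t, w s(v, u) := by
            refine Finset.sum_le_sum fun v hv => ?_
            apply Finset.sum_le_sum_of_subset_of_nonneg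
            · exact fun u hu => Finset.mem_biUnion.2 ⟨v, hv, hu⟩
            · exact fun u _ _ => (hw01 _).1
        _ = ∑ u ∈ S.biUnion t, ∑ v ∈ S, w s(v, u) := Finset.sum_comm
        _ ≤ ∑ u ∈ S.biUnion t, (1 : ℝ) := by
            refine Finset.sum_le_sum fun u _ => ?_
            calc ∑ v ∈ S, w s(v, u) ≤ ∑ v : V, w s(v, u) := by
                  apply Finset.sum_le_sum_of_subset_of_nonneg (Finset.subset_univ _)
                  exact fun x _ _ => (hw01 _).1
              _ = ∑ v : V, w s(u, v) := by
                  refine Finset.sum_congr rfl fun v _ => by rw [Sym2.eq_swap]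
              _ = 1 := hrow u
        _ = ((S.biUnion t).card : ℝ) := by simp
    exact_mod_cast key
  obtain ⟨f, hfinj, hft⟩ := (Finset.all_card_le_biUnion_card_iff_exists_injective t).1 hall
  have hfadj : ∀ v, G.Adj v (f v) := by
    intro v
    have := hft v
    simp only [ht_def, Finset.mem_filter, Finset.mem_univ, true_and] at this
    by_contra h
    rw [hwsupp s(v, f v) (fun he => h ((SimpleGraph.mem_edgeSet G).1 he))] at this
    exact lt_irrefl 0 this
  let σ : Equiv.Perm V := Equiv.ofBijective f ((Finite.injective_iff_bijective).1 hfinj)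
  have hσ : ∀ v, σ v = f v := fun v => rfl
  exact perm_two_matching G σ (fun v => by rw [hσ]; exact (hfadj v).ne')
    (fun v => by rw [hσ]; exact hfadj v)
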